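/- Let p : ℝ → ℝ be a real polynomial of degree 4 with four distinct real zeros x₁ < x₂ < x₃ < x₄. Denote by y₁ < y₂ < y₃ the zeros of p', by z₁ < z₂ the zeros of p'', and by t₁ the zero of p'''. If x₂ < z₁ and x₃ < z₂, then y₂ < t₁. Equivalently, the symbolic sequences 0102310210 and 0120132010 are non-realizable by degree-4 polynomials with all real distinct roots. -/

import Mathlib

open Polynomial

lemma factor4' (p : Polynomial ℝ) (hdeg : p.natDegree ≤ 4)
    (x₁ x₂ x₃ x₄ : ℝ)
    (h12 : x₁ ≠ x₂) (h13 : x₁ ≠ x₃) (h14 : x₁ ≠ x₄)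
    (h23 : x₂ ≠ x₃) (h24 : x₂ ≠ x₄) (h34 : x₃ ≠ x₄)
    (e1 : p.eval x₁ = 0) (e2 : p.eval x₂ = 0) (e3 : p.eval x₃ = 0) (e4 : p.eval x₄ = 0) :
    p = C (p.coeff 4) * ((X - C x₁) * (X - C x₂) * (X - C x₃) * (X - C x₄)) := by
  set M : Polynomial ℝ := (X - C x₁) * (X - C x₂) * (X - C x₃) * (X - C x₄) with hM
  have hMmonic : M.Monic :=
    (((monic_X_sub_C x₁).mul (monic_X_sub_C x₂)).mul (monic_X_sub_C x₃)).mul (monic_X_sub_C x₄)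
  have hMdeg : M.natDegree = 4 := by
    rw [hM]
    rw [(((monic_X_sub_C x₁).mul (monic_X_sub_C x₂)).mul (monic_X_sub_C x₃)).natDegree_mul (monic_X_sub_C x₄),
        (((monic_X_sub_C x₁).mul (monic_X_sub_C x₂))).natDegree_mul (monic_X_sub_C x₃),
        ((monic_X_sub_C x₁)).natDegree_mul (monic_X_sub_C x₂)]
    simp [natDegree_X_sub_C]
  have hsub : (p - C (p.coeff 4) * M).natDegree ≤ 3 := by
    rw [natDegree_le_iff_coeff_eq_zero]
    intro N hN
    rcases Nat.lt_or_ge N 5 with h5 | h5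
    · have hN4 : N = 4 := by omega
      subst hN4
      have : M.coeff 4 = 1 := by
        have := hMmonic.coeff_natDegree
        rwa [hMdeg] at this
      simp [coeff_sub, coeff_C_mul, this]
    · have h1 : p.coeff N = 0 := coeff_eq_zero_of_natDegree_lt (by omega)
      have h2 : M.coeff N = 0 := coeff_eq_zero_of_natDegree_lt (by omega)
      simp [coeff_sub, coeff_C_mul, h1, h2]
  have hcard : ({x₁, x₂, x₃, x₄} : Finset ℝ).card = 4 := by
    rw [Finset.card_insert_of_notMem (by simp [h12, h13, h14]),
        Finset.card_insert_of_notMem (by simp [h23, h24]),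
        Finset.card_insert_of_notMem (by simp [h34]), Finset.card_singleton]
  have hq : p - C (p.coeff 4) * M = 0 := by
    apply eq_zero_of_natDegree_lt_card_of_eval_eq_zero' _ ({x₁, x₂, x₃, x₄} : Finset ℝ)
    · intro i hi
      simp only [Finset.mem_insert, Finset.mem_singleton] at hi
      rcases hi with rfl | rfl | rfl | rfl <;>
        simp [hM, eval_mul, e1, e2, e3, e4, sub_self]
    · rw [hcard]; omega
  linear_combination (norm := ring_nf) hq

lemma factor3' (p : Polynomial ℝ) (hdeg : p.natDegree ≤ 3)
    (y₁ y₂ y₃ : ℝ) (h12 : y₁ ≠ y₂) (h13 : y₁ ≠ y₃) (h23 : y₂ ≠ y₃)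
    (e1 : p.eval y₁ = 0) (e2 : p.eval y₂ = 0) (e3 : p.eval y₃ = 0) :
    p = C (p.coeff 3) * ((X - C y₁) * (X - C y₂) * (X - C y₃)) := by
  set M : Polynomial ℝ := (X - C y₁) * (X - C y₂) * (X - C y₃) with hM
  have hMmonic : M.Monic :=
    ((monic_X_sub_C y₁).mul (monic_X_sub_C y₂)).mul (monic_X_sub_C y₃)
  have hMdeg : M.natDegree = 3 := by
    rw [hM, ((monic_X_sub_C y₁).mul (monic_X_sub_C y₂)).natDegree_mul (monic_X_sub_C y₃),
        (monic_X_sub_C y₁).natDegree_mul (monic_X_sub_C y₂)]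
    simp [natDegree_X_sub_C]
  have hsub : (p - C (p.coeff 3) * M).natDegree ≤ 2 := by
    rw [natDegree_le_iff_coeff_eq_zero]
    intro N hN
    rcases Nat.lt_or_ge N 4 with h4 | h4
    · have hN3 : N = 3 := by omega
      subst hN3
      have : M.coeff 3 = 1 := by
        have := hMmonic.coeff_natDegree
        rwa [hMdeg] at this
      simp [coeff_sub, coeff_C_mul, this]
    · have h1 : p.coeff N = 0 := coeff_eq_zero_of_natDegree_lt (by omega)
      have h2 : M.coeff N = 0 := coeff_eq_zero_of_natDegree_lt (by omega)
      simp [coeff_sub, coeff_C_mul, h1, h2]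
  have hcard : ({y₁, y₂, y₃} : Finset ℝ).card = 3 := by
    rw [Finset.card_insert_of_notMem (by simp [h12, h13]),
        Finset.card_insert_of_notMem (by simp [h23]), Finset.card_singleton]
  have hq : p - C (p.coeff 3) * M = 0 := by
    apply eq_zero_of_natDegree_lt_card_of_eval_eq_zero' _ ({y₁, y₂, y₃} : Finset ℝ)
    · intro i hi
      simp only [Finset.mem_insert, Finset.mem_singleton] at hi
      rcases hi with rfl | rfl | rfl <;> simp [hM, eval_mul, e1, e2, e3, sub_self]
    · rw [hcard]; omega
  linear_combination (norm := ring_nf) hq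

private lemma mul_nonneg_np {x y : ℝ} (hx : x ≤ 0) (hy : y ≤ 0) : 0 ≤ x * y := by nlinarith

set_option maxHeartbeats 1000000 in
/-- **Anderson's theorem (degree 4).** Let `p` be a real polynomial of degree 4
with distinct real zeros `x1 < x2 < x3 < x4`, let `y1 < y2 < y3` be the zeros
of the first derivative, `z1 < z2` the zeros of the second derivative and `t1`
the zero of the third derivative. If `x2 < z1` and `x3 < z2`, then `y2 < t1`.
(Hence the symbolic sequences `0102310210` and `0120132010` are non-realizable.) -/
theorem quartic_zero_arrangement_restriction
    (p : Polynomial ℝ) (hdeg : p.natDegree = 4)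
    (x₁ x₂ x₃ x₄ y₁ y₂ y₃ z₁ z₂ t₁ : ℝ)
    (hx12 : x₁ < x₂) (hx23 : x₂ < x₃) (hx34 : x₃ < x₄)
    (hy12 : y₁ < y₂) (hy23 : y₂ < y₃) (hz12 : z₁ < z₂)
    (hpx₁ : p.eval x₁ = 0) (hpx₂ : p.eval x₂ = 0)
    (hpx₃ : p.eval x₃ = 0) (hpx₄ : p.eval x₄ = 0)
    (hpy₁ : (derivative p).eval y₁ = 0) (hpy₂ : (derivative p).eval y₂ = 0)
    (hpy₃ : (derivative p).eval y₃ = 0)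
    (hpz₁ : (derivative (derivative p)).eval z₁ = 0)
    (hpz₂ : (derivative (derivative p)).eval z₂ = 0)
    (hpt₁ : (derivative (derivative (derivative p))).eval t₁ = 0)
    (hcase₁ : x₂ < z₁) (hcase₂ : x₃ < z₂) :
    y₂ < t₁ := by
  have hp0 : p ≠ 0 := fun h => by simp [h] at hdeg
  set a := p.coeff 4 with ha_def
  have ha : a ≠ 0 := by
    rw [ha_def, ← hdeg]
    exact leadingCoeff_ne_zero.mpr hp0
  -- factor p over the xᵢ
  have hfac : p = C a * ((X - C x₁) * (X - C x₂) * (X - C x₃) * (X - C x₄)) :=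
    factor4' p hdeg.le x₁ x₂ x₃ x₄ hx12.ne (hx12.trans hx23).ne
      ((hx12.trans hx23).trans hx34).ne hx23.ne (hx23.trans hx34).ne hx34.ne
      hpx₁ hpx₂ hpx₃ hpx₄
  -- factor p' over the yⱼ
  have hd3 : (derivative p).coeff 3 = a * 4 := by
    rw [coeff_derivative]; norm_num
    exact ha_def.symm
  have hddeg : (derivative p).natDegree ≤ 3 := by
    have := natDegree_derivative_le p
    omega
  have hfac' : derivative p = C (a * 4) * ((X - C y₁) * (X - C y₂) * (X - C y₃)) := by
    rw [← hd3]
    exact factor3' (derivative p) hddeg y₁ y₂ y₃ hy12.ne (hy12.trans hy23).ne hy23.ne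
      hpy₁ hpy₂ hpy₃
  -- evaluation formulas
  have F1 : ∀ u : ℝ, p.eval u = a * ((u - x₁) * (u - x₂) * (u - x₃) * (u - x₄)) := by
    intro u; rw [hfac]; simp only [eval_mul, eval_sub, eval_X, eval_C]
  have F2 : ∀ u : ℝ, (derivative p).eval u = 4 * a * ((u - y₁) * (u - y₂) * (u - y₃)) := by
    intro u; rw [hfac']; simp only [eval_mul, eval_sub, eval_X, eval_C]; ring
  have F2x : ∀ u : ℝ, (derivative p).eval u
      = a * ((u - x₂) * (u - x₃) * (u - x₄) + (u - x₁) * (u - x₃) * (u - x₄)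
        + (u - x₁) * (u - x₂) * (u - x₄) + (u - x₁) * (u - x₂) * (u - x₃)) := by
    intro u; rw [hfac]
    simp only [derivative_mul, derivative_C, derivative_X, derivative_sub, zero_mul, zero_add,
      mul_one, eval_add, eval_mul, eval_sub, eval_X, eval_C, eval_one, one_mul, eval_zero,
      mul_zero, zero_mul, add_zero]
    ring
  have F3 : ∀ u : ℝ, (derivative (derivative p)).eval u
      = 4 * a * ((u - y₁) * (u - y₂) + (u - y₁) * (u - y₃) + (u - y₂) * (u - y₃)) := by
    intro u; rw [hfac']
    simp only [derivative_mul, derivative_C, derivative_X, derivative_sub, zero_mul, zero_add,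
      mul_one, eval_add, eval_mul, eval_sub, eval_X, eval_C, eval_one, one_mul, eval_zero,
      mul_zero, zero_mul, add_zero]
    ring
  have F4 : ∀ u : ℝ, (derivative (derivative (derivative p))).eval u
      = 4 * a * (6 * u - 2 * (y₁ + y₂ + y₃)) := by
    intro u; rw [hfac']
    simp only [derivative_mul, derivative_C, derivative_X, derivative_sub, zero_mul, zero_add,
      mul_one, derivative_add, derivative_one, derivative_zero, eval_add, eval_mul, eval_sub, eval_X, eval_C,
      eval_one, one_mul, eval_zero, mul_zero, zero_mul, add_zero]
    ring
  have F5 : ∀ u : ℝ, p.eval u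
      = p.coeff 0 + p.coeff 1 * u + p.coeff 2 * u ^ 2 + p.coeff 3 * u ^ 3 + a * u ^ 4 := by
    intro u
    rw [eval_eq_sum_range, hdeg]
    simp [Finset.sum_range_succ]
    exact Or.inl ha_def.symm
  have F6 : ∀ u : ℝ, (derivative p).eval u
      = p.coeff 1 + 2 * p.coeff 2 * u + 3 * p.coeff 3 * u ^ 2 + 4 * a * u ^ 3 := by
    intro u
    rw [eval_eq_sum_range' (show (derivative p).natDegree < 4 by omega)]
    simp [Finset.sum_range_succ, coeff_derivative]
    ring
  -- basic consequences of the hypotheses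
  have ha2 : (0:ℝ) < a ^ 2 := lt_of_le_of_ne (sq_nonneg a) (Ne.symm (pow_ne_zero 2 ha))
  have ht : 3 * t₁ = y₁ + y₂ + y₃ := by
    have h := hpt₁
    rw [F4 t₁] at h
    rcases mul_eq_zero.mp h with h' | h'
    · exact absurd (by linarith : a = 0) ha
    · linarith
  have hs₁ : (z₁ - y₁) * (z₁ - y₂) + (z₁ - y₁) * (z₁ - y₃) + (z₁ - y₂) * (z₁ - y₃) = 0 := by
    have h := hpz₁
    rw [F3 z₁] at h
    rcases mul_eq_zero.mp h with h' | h'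
    · exact absurd (by linarith : a = 0) ha
    · exact h'
  have hs₂ : (z₂ - y₁) * (z₂ - y₂) + (z₂ - y₁) * (z₂ - y₃) + (z₂ - y₂) * (z₂ - y₃) = 0 := by
    have h := hpz₂
    rw [F3 z₂] at h
    rcases mul_eq_zero.mp h with h' | h'
    · exact absurd (by linarith : a = 0) ha
    · exact h'
  have hzsum : z₁ + z₂ = 2 * t₁ := by
    have h : (z₁ - z₂) * (3 * (z₁ + z₂) - 2 * (y₁ + y₂ + y₃)) = 0 := by
      linear_combination hs₁ - hs₂
    rcases mul_eq_zero.mp h with h' | h'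
    · exact absurd h' (sub_ne_zero.mpr hz12.ne)
    · linarith
  have hzprod : y₁ * y₂ + y₁ * y₃ + y₂ * y₃ = 3 * (z₁ * z₂) := by
    linear_combination hs₁ - 2 * z₁ * ht - 3 * z₁ * hzsum
  have hid₂ : 3 * ((y₂ - z₁) * (y₂ - z₂)) = (y₂ - y₁) * (y₂ - y₃) := by
    linear_combination (-1 : ℝ) * hzprod - 3 * y₂ * hzsum - 2 * y₂ * ht
  have hid₃ : 3 * ((y₃ - z₁) * (y₃ - z₂)) = (y₃ - y₁) * (y₃ - y₂) := by
    linear_combination (-1 : ℝ) * hzprod - 3 * y₃ * hzsum - 2 * y₃ * ht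
  have hneg₂ : (y₂ - z₁) * (y₂ - z₂) < 0 := by
    have k : (y₂ - y₁) * (y₂ - y₃) < 0 := mul_neg_of_pos_of_neg (by linarith) (by linarith)
    linarith [hid₂, k]
  have hz₁y₂ : z₁ < y₂ := by
    by_contra h
    push_neg at h
    exact absurd hneg₂ (not_lt.mpr (mul_nonneg_np (by linarith) (by linarith)))
  have hy₂z₂ : y₂ < z₂ := by
    by_contra h
    push_neg at h
    exact absurd hneg₂ (not_lt.mpr (mul_nonneg (by linarith) (by linarith)))
  have hpos₃ : 0 < (y₃ - z₁) * (y₃ - z₂) := by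
    have k : 0 < (y₃ - y₁) * (y₃ - y₂) := mul_pos (by linarith) (by linarith)
    linarith [hid₃, k]
  have hz₂y₃ : z₂ < y₃ := by
    by_contra h
    push_neg at h
    exact absurd hpos₃ (not_lt.mpr (mul_nonpos_of_nonneg_of_nonpos (by linarith) (by linarith)))
  -- interlacing of the xᵢ and yⱼ
  have hAgen : ∀ u : ℝ, (u - x₂) * (u - x₃) * (u - x₄) + (u - x₁) * (u - x₃) * (u - x₄)
      + (u - x₁) * (u - x₂) * (u - x₄) + (u - x₁) * (u - x₂) * (u - x₃)
      = 4 * ((u - y₁) * (u - y₂) * (u - y₃)) := by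
    intro u
    have h : a * ((u - x₂) * (u - x₃) * (u - x₄) + (u - x₁) * (u - x₃) * (u - x₄)
        + (u - x₁) * (u - x₂) * (u - x₄) + (u - x₁) * (u - x₂) * (u - x₃)
        - 4 * ((u - y₁) * (u - y₂) * (u - y₃))) = 0 := by
      linear_combination F2 u - F2x u
    rcases mul_eq_zero.mp h with h' | h'
    · exact absurd h' ha
    · linarith
  have hA₂ : (x₂ - x₁) * (x₂ - x₃) * (x₂ - x₄) = 4 * ((x₂ - y₁) * (x₂ - y₂) * (x₂ - y₃)) := by
    linear_combination hAgen x₂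
  have hA₃ : (x₃ - x₁) * (x₃ - x₂) * (x₃ - x₄) = 4 * ((x₃ - y₁) * (x₃ - y₂) * (x₃ - y₃)) := by
    linear_combination hAgen x₃
  have hA₄ : (x₄ - x₁) * (x₄ - x₂) * (x₄ - x₃) = 4 * ((x₄ - y₁) * (x₄ - y₂) * (x₄ - y₃)) := by
    linear_combination hAgen x₄
  have hy₂x₃ : y₂ < x₃ := by
    by_contra hc
    push_neg at hc
    have hy₁x₂ : y₁ < x₂ := by
      by_contra hc2
      push_neg at hc2
      have k0 : 0 < ((x₂ - x₁)) * ((x₂ - x₃) * (x₂ - x₄)) :=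
        mul_pos (by linarith) (mul_pos_of_neg_of_neg (by linarith) (by linarith))
      have k1 : 0 < (x₂ - y₂) * (x₂ - y₃) :=
        mul_pos_of_neg_of_neg (by linarith) (by linarith)
      have k5 : (x₂ - y₁) * ((x₂ - y₂) * (x₂ - y₃)) ≤ 0 :=
        mul_nonpos_of_nonpos_of_nonneg (by linarith) k1.le
      linarith [hA₂, k0, k5]
    have k2 : 0 ≤ (x₃ - y₂) * (x₃ - y₃) := mul_nonneg_np (by linarith) (by linarith)
    have k3 : 0 ≤ (x₃ - y₁) * ((x₃ - y₂) * (x₃ - y₃)) := mul_nonneg (by linarith) k2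
    have k4 : ((x₃ - x₁) * (x₃ - x₂)) * (x₃ - x₄) < 0 :=
      mul_neg_of_pos_of_neg (mul_pos (by linarith) (by linarith)) (by linarith)
    linarith [hA₃, k3, k4]
  have hy₃x₄ : y₃ < x₄ := by
    by_contra hc
    push_neg at hc
    have k1 : 0 < ((x₄ - x₁) * (x₄ - x₂)) * (x₄ - x₃) :=
      mul_pos (mul_pos (by linarith) (by linarith)) (by linarith)
    have k2 : ((x₄ - y₁) * (x₄ - y₂)) * (x₄ - y₃) ≤ 0 :=
      mul_nonpos_of_nonneg_of_nonpos (mul_pos (by linarith) (by linarith)).le (by linarith)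
    linarith [hA₄, k1, k2]
  -- main contradiction
  by_contra hmain
  push_neg at hmain
  have hy₁t : y₁ < t₁ := by linarith
  have hPt : 0 ≤ a * (derivative p).eval t₁ := by
    rw [F2 t₁]
    have k1 : 0 ≤ (t₁ - y₂) * (t₁ - y₃) := mul_nonneg_np (by linarith) (by linarith)
    have k2 : 0 ≤ (t₁ - y₁) * ((t₁ - y₂) * (t₁ - y₃)) := mul_nonneg (by linarith) k1
    linarith [mul_nonneg ha2.le k2]
  have hddd : (derivative (derivative (derivative p))).natDegree < 2 := by
    have h1 := natDegree_derivative_le p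
    have h2 := natDegree_derivative_le (derivative p)
    have h3 := natDegree_derivative_le (derivative (derivative p))
    omega
  have h7 : (derivative (derivative (derivative p))).eval t₁ = 6 * p.coeff 3 + 24 * a * t₁ := by
    rw [eval_eq_sum_range' hddd]
    simp [Finset.sum_range_succ, coeff_derivative]
    ring
  have hb : p.coeff 3 = -(4 * a * t₁) := by
    have h8 : 6 * p.coeff 3 + 24 * a * t₁ = 0 := by rw [← h7, hpt₁]
    linarith
  have hdiff : p.eval z₂ - p.eval z₁ = (z₂ - z₁) * ((derivative p).eval t₁) := by
    have hz₁e : z₁ = 2 * t₁ - z₂ := by linarith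
    rw [F5 z₂, F5 z₁, F6 t₁, hb, hz₁e]
    ring
  have hsign₁ : 0 < a * p.eval z₁ := by
    have k1 : 0 < ((z₁ - x₁) * (z₁ - x₂)) * ((z₁ - x₃) * (z₁ - x₄)) :=
      mul_pos (mul_pos (by linarith) (by linarith))
        (mul_pos_of_neg_of_neg (by linarith) (by linarith))
    rw [F1 z₁]
    linarith [mul_pos ha2 k1]
  have hsign₂ : a * p.eval z₂ < 0 := by
    have k2 : ((z₂ - x₁) * (z₂ - x₂)) * ((z₂ - x₃) * (z₂ - x₄)) < 0 :=
      mul_neg_of_pos_of_neg (mul_pos (by linarith) (by linarith))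
        (mul_neg_of_pos_of_neg (by linarith) (by linarith))
    rw [F1 z₂]
    linarith [mul_neg_of_pos_of_neg ha2 k2]
  have hfin : a * p.eval z₂ - a * p.eval z₁ = (z₂ - z₁) * (a * (derivative p).eval t₁) := by
    linear_combination a * hdiff
  linarith [mul_nonneg (by linarith : (0:ℝ) ≤ z₂ - z₁) hPt, hfin, hsign₁, hsign₂]
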